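/- Let b : ℝ → ℝ be continuously differentiable and nonincreasing (b' ≤ 0), and let φ denote the flow of the ODE ż = b(z). Let w : [s,t] → ℝ be a continuous path with w_s = 0 and sup_{r ∈ [s,t]} |w_r| < w̄ for some w̄ > 0. If X : [s,t] → ℝ satisfies X_u = X_s + ∫_s^u b(X_r) dr + w_u for all u ∈ [s,t], then for all u ∈ [s,t]: φ(X_s + w̄, u − s) − 2w̄ ≤ X_u ≤ φ(X_s − w̄, u − s) + 2w̄. -/

import Mathlib

open Set intervalIntegral

/-- Generic one-sided comparison: if `u' = b ∘ α`, `v' = b ∘ β` (right derivatives),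
`u s ≤ v s + wbar`, and whenever `v x + wbar ≤ u x` we have `b (α x) ≤ b (β x)`,
then `u ≤ v + wbar` on `[s, t]`. -/
lemma stmt_8_aux {b : ℝ → ℝ} {s t wbar : ℝ} (hst : s ≤ t)
    {u v α β : ℝ → ℝ} (hu : ContinuousOn u (Set.Icc s t)) (hv : ContinuousOn v (Set.Icc s t))
    (hu' : ∀ x ∈ Set.Ico s t, HasDerivWithinAt u (b (α x)) (Set.Ici x) x)
    (hv' : ∀ x ∈ Set.Ico s t, HasDerivWithinAt v (b (β x)) (Set.Ici x) x)
    (hs : u s ≤ v s + wbar)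
    (hcross : ∀ x ∈ Set.Ico s t, v x + wbar ≤ u x → b (α x) ≤ b (β x)) :
    ∀ x ∈ Set.Icc s t, u x ≤ v x + wbar := by
  intro x hx
  have key : ∀ ε > (0:ℝ), u x ≤ v x + wbar + ε * (x - s) := by
    intro ε hε
    have hB : ContinuousOn (fun y => v y + wbar + ε * (y - s)) (Set.Icc s t) :=
      (hv.add continuousOn_const).add
        (continuousOn_const.mul (continuousOn_id.sub continuousOn_const))
    have hB' : ∀ y ∈ Set.Ico s t,
        HasDerivWithinAt (fun y => v y + wbar + ε * (y - s)) (b (β y) + ε) (Set.Ici y) y := by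
      intro y hy
      have h1 : HasDerivWithinAt (fun y => ε * (y - s)) (ε * 1) (Set.Ici y) y :=
        ((hasDerivWithinAt_id y _).sub_const s).const_mul ε
      exact (((hv' y hy).add_const wbar).add h1).congr_deriv (by ring)
    have bound : ∀ y ∈ Set.Ico s t,
        u y = v y + wbar + ε * (y - s) → b (α y) < b (β y) + ε := by
      intro y hy hEq
      have h0 : 0 ≤ ε * (y - s) := mul_nonneg hε.le (by linarith [hy.1])
      have h1 : v y + wbar ≤ u y := by linarith
      have := hcross y hy h1
      linarith
    have := image_le_of_deriv_right_lt_deriv_boundary' hu hu'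
      (by simpa using hs) hB hB' bound
    exact this hx
  refine le_of_forall_pos_le_add fun ε hε => ?_
  have h1 : (0:ℝ) < t - s + 1 := by linarith
  have h2 := key (ε / (t - s + 1)) (by positivity)
  have h3 : ε / (t - s + 1) * (x - s) ≤ ε := by
    have hle : x - s ≤ t - s + 1 := by linarith [hx.2]
    calc ε / (t - s + 1) * (x - s) ≤ ε / (t - s + 1) * (t - s + 1) :=
          mul_le_mul_of_nonneg_left hle (by positivity)
      _ = ε := div_mul_cancel₀ ε h1.ne'
  linarith

/-- Comparison lemma for decreasing drift: φ(X_s + wbar, u−s) − 2wbar ≤ X_u ≤ φ(X_s − wbar, u−s) + 2wbar. -/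
theorem stmt_8 (b : ℝ → ℝ) (hb : ContDiff ℝ 1 b) (hb' : ∀ x, deriv b x ≤ 0)
    (φ : ℝ → ℝ → ℝ)
    (hφ0 : ∀ x : ℝ, φ x 0 = x)
    (hφ' : ∀ x h : ℝ, 0 ≤ h → HasDerivAt (φ x) (b (φ x h)) h)
    (s t wbar : ℝ) (hst : s < t) (hwbar : 0 < wbar)
    (w X : ℝ → ℝ)
    (hw : ContinuousOn w (Set.Icc s t)) (hws : w s = 0)
    (hwbd : ∀ r ∈ Set.Icc s t, |w r| < wbar)
    (hX : ContinuousOn X (Set.Icc s t))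
    (hXeq : ∀ u ∈ Set.Icc s t, X u = X s + (∫ r in s..u, b (X r)) + w u) :
    ∀ u ∈ Set.Icc s t,
      φ (X s + wbar) (u - s) - 2 * wbar ≤ X u ∧ X u ≤ φ (X s - wbar) (u - s) + 2 * wbar := by
  have hanti : Antitone b := antitone_of_deriv_nonpos (hb.differentiable one_ne_zero) hb'
  -- clamped version of X
  set Xc : ℝ → ℝ := fun r => X (max s (min r t)) with hXc_def
  have hmem : ∀ r : ℝ, max s (min r t) ∈ Set.Icc s t := fun r =>
    ⟨le_max_left _ _, max_le hst.le (min_le_right _ _)⟩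
  have hXcX : ∀ r ∈ Set.Icc s t, Xc r = X r := by
    intro r hr
    simp only [hXc_def, min_eq_left hr.2, max_eq_right hr.1]
  have hXcc : Continuous Xc :=
    hX.comp_continuous (continuous_const.max (continuous_id.min continuous_const)) hmem
  set f : ℝ → ℝ := fun r => b (Xc r) with hf_def
  have hfc : Continuous f := hb.continuous.comp hXcc
  set G : ℝ → ℝ := fun x => ∫ r in s..x, f r with hG_def
  have hG : ∀ x : ℝ, HasDerivAt G (f x) x := fun x =>
    (hfc.integral_hasStrictDerivAt s x).hasDerivAt
  have hGdiff : Differentiable ℝ G := fun x => (hG x).differentiableAt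
  have hGc : Continuous G := hGdiff.continuous
  have heq : ∀ x ∈ Set.Icc s t, X s + G x = X x - w x := by
    intro x hx
    have hG_eq : G x = ∫ r in s..x, b (X r) := by
      refine intervalIntegral.integral_congr fun r hr => ?_
      rw [Set.uIcc_of_le hx.1] at hr
      have hr' : r ∈ Set.Icc s t := ⟨hr.1, hr.2.trans hx.2⟩
      simp only [hf_def, hXcX r hr']
    have := hXeq x hx
    rw [hG_eq]; linarith
  have hGs : G s = 0 := intervalIntegral.integral_same
  -- flows
  have hflow : ∀ c : ℝ, ∀ x ∈ Set.Icc s t,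
      HasDerivAt (fun y => φ c (y - s)) (b (φ c (x - s))) x := by
    intro c x hx
    have h0 : 0 ≤ x - s := by linarith [hx.1]
    have := (hφ' c (x - s) h0).comp x ((hasDerivAt_id x).sub_const s)
    exact this.congr_deriv (mul_one _)
  have hflowc : ∀ c : ℝ, ContinuousOn (fun y => φ c (y - s)) (Set.Icc s t) :=
    fun c x hx => (hflow c x hx).continuousAt.continuousWithinAt
  -- upper bound: X s + G ≤ ψ + wbar with ψ = φ (X s - wbar) (· - s)
  have hupper : ∀ x ∈ Set.Icc s t,
      X s + G x ≤ φ (X s - wbar) (x - s) + wbar := by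
    refine stmt_8_aux (b := b) hst.le (α := Xc)
      (β := fun y => φ (X s - wbar) (y - s))
      (continuousOn_const.add hGc.continuousOn) (hflowc _) ?_ ?_ ?_ ?_
    · intro x hx
      exact ((hG x).const_add (X s)).hasDerivWithinAt
    · intro x hx
      exact (hflow _ x (Set.Ico_subset_Icc_self hx)).hasDerivWithinAt
    · simp [hGs, hφ0]
    · intro x hx hle
      have hx' : x ∈ Set.Icc s t := Set.Ico_subset_Icc_self hx
      have hwx := hwbd x hx'
      have h1 : X s + G x = X x - w x := heq x hx'
      have h2 : w x > -wbar := by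
        have := abs_lt.mp hwx; linarith [this.1]
      have h3 : φ (X s - wbar) (x - s) ≤ X x := by linarith
      rw [hXcX x hx']
      exact hanti h3
  -- lower bound: φ (X s + wbar) (· - s) ≤ X s + G + wbar
  have hlower : ∀ x ∈ Set.Icc s t,
      φ (X s + wbar) (x - s) ≤ X s + G x + wbar := by
    refine stmt_8_aux (b := b) hst.le
      (α := fun y => φ (X s + wbar) (y - s)) (β := Xc)
      (hflowc _) (continuousOn_const.add hGc.continuousOn) ?_ ?_ ?_ ?_
    · intro x hx
      exact (hflow _ x (Set.Ico_subset_Icc_self hx)).hasDerivWithinAt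
    · intro x hx
      exact ((hG x).const_add (X s)).hasDerivWithinAt
    · simp [hGs, hφ0]
    · intro x hx hle
      have hx' : x ∈ Set.Icc s t := Set.Ico_subset_Icc_self hx
      have hwx := hwbd x hx'
      have h1 : X s + G x = X x - w x := heq x hx'
      have h2 : w x < wbar := by
        have := abs_lt.mp hwx; linarith [this.2]
      have h3 : X x ≤ φ (X s + wbar) (x - s) := by linarith
      rw [hXcX x hx']
      exact hanti h3
  intro u hu
  have hwu := abs_lt.mp (hwbd u hu)
  have h1 := heq u hu
  have h2 := hupper u hu
  have h3 := hlower u hu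
  constructor <;> linarith
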